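/- Let g(z) = Σ_α t_α z^α be a finite Laurent polynomial with real coefficients, and for N ≥ 1 decompose g = Σ_{i=0}^{N-1} g_i where g_i(z) = Σ_{n} t_{nN+i} z^{nN+i}. Let f be defined by f(z^N) = Π_{n=0}^{N-1} g(ζ^n z) where ζ = e^{2πi/N}. Then f is a well-defined Laurent polynomial in z^N, and the topological invariant of f equals the topological invariant of g, i.e., ω(f) = ω(g) where ω counts zeros minus pole order strictly inside the unit disk. -/

import Mathlib

open Complex Polynomial Multiset

private theorem myCoeffComp (P : ℂ[X]) (a : ℂ) (k : ℕ) :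
    (P.comp (C a * X)).coeff k = a ^ k * P.coeff k := by
  induction P using Polynomial.induction_on' with
  | add p q hp hq => simp [add_comp, hp, hq, mul_add]
  | monomial n b =>
      rw [monomial_comp, mul_pow, ← C_pow, coeff_C_mul, coeff_C_mul, coeff_X_pow, coeff_monomial]
      by_cases h : k = n
      · subst h; simp; ring
      · simp [h, Ne.symm h]

private theorem myRootsComp (P : ℂ[X]) (a : ℂ) (ha : a ≠ 0) :
    (P.comp (C a * X)).roots = P.roots.map (fun r => a⁻¹ * r) := by
  by_cases hP : P = 0
  · simp [hP]
  have h1 : P = C P.leadingCoeff * (P.roots.map fun r => X - C r).prod :=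
    (IsAlgClosed.splits P).eq_prod_roots
  have h2 : ∀ r : ℂ, (X - C r).comp (C a * X) = C a * (X - C (a⁻¹ * r)) := by
    intro r
    rw [sub_comp, X_comp, C_comp, mul_sub, ← C_mul, mul_inv_cancel_left₀ ha]
  conv_lhs => rw [h1]
  rw [mul_comp, C_comp, multiset_prod_comp, Multiset.map_map]
  simp only [Function.comp, h2]
  rw [Multiset.prod_map_mul, Multiset.map_const', Multiset.prod_replicate, ← C_pow, ← mul_assoc,
    ← C_mul, roots_C_mul _ (mul_ne_zero (leadingCoeff_ne_zero.mpr hP) (pow_ne_zero _ ha)),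
    show (P.roots.map fun r => X - C (a⁻¹ * r))
        = (P.roots.map (fun r => a⁻¹ * r)).map (fun b => X - C b) from by
          rw [Multiset.map_map]; rfl,
    roots_multiset_prod_X_sub_C]

private theorem myCardFilterBind {α β : Type*} (s : Multiset α) (g : α → Multiset β) (p : β → Prop)
    [DecidablePred p] :
    card (filter p (s.bind g)) = (s.map (fun a => card (filter p (g a)))).sum := by
  induction s using Multiset.induction_on with
  | empty => simp
  | cons a s ih => simp [Multiset.cons_bind, Multiset.filter_add, ih]

private theorem mySumIte {α : Type*} (s : Multiset α) (p : α → Prop) [DecidablePred p] (N : ℕ) :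
    (s.map (fun a => if p a then N else 0)).sum = N * card (filter p s) := by
  induction s using Multiset.induction_on with
  | empty => simp
  | cons a s ih => by_cases h : p a <;> simp [h, ih, mul_add, add_comm]

private theorem myCardNth (N : ℕ) (hN : 0 < N) (w : ℂ) :
    card (filter (fun z => ‖z‖ < 1) (nthRoots N w)) = if ‖w‖ < 1 then N else 0 := by
  have hmem : ∀ z ∈ nthRoots N w, (‖z‖ < 1 ↔ ‖w‖ < 1) := by
    intro z hz
    rw [mem_nthRoots hN] at hz
    subst hz
    rw [norm_pow]
    exact (pow_lt_one_iff_of_nonneg (norm_nonneg z) hN.ne').symm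
  by_cases h : ‖w‖ < 1
  · rw [if_pos h, Multiset.filter_eq_self.mpr (fun z hz => (hmem z hz).mpr h)]
    obtain ⟨α, hα⟩ := IsAlgClosed.exists_pow_nat_eq w hN
    rw [(Complex.isPrimitiveRoot_exp N hN.ne').card_nthRoots w, if_pos ⟨α, hα⟩]
  · rw [if_neg h, Multiset.card_eq_zero, Multiset.filter_eq_nil]
    exact fun z hz hlt => h ((hmem z hz).mp hlt)

private theorem myCardCompXN (Q : ℂ[X]) (hQ : Q ≠ 0) (N : ℕ) (hN : 0 < N) :
    card (((Q.comp (X ^ N)).roots).filter (fun z => ‖z‖ < 1))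
      = N * card ((Q.roots).filter (fun z => ‖z‖ < 1)) := by
  conv_lhs => rw [(IsAlgClosed.splits Q).eq_prod_roots]
  rw [mul_comp, C_comp, multiset_prod_comp, Multiset.map_map]
  have h2 : ∀ r : ℂ, (X - C r).comp (X ^ N) = X ^ N - C r := by
    intro r; rw [sub_comp, X_comp, C_comp]
  simp only [Function.comp, h2]
  rw [roots_C_mul _ (leadingCoeff_ne_zero.mpr hQ),
    roots_multiset_prod _ (by
      intro h0
      rw [Multiset.mem_map] at h0
      obtain ⟨r, _, hr⟩ := h0
      have hco : (X ^ N - C r).coeff N = 1 := by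
        rw [coeff_sub, coeff_X_pow, if_pos rfl, coeff_C, if_neg hN.ne', sub_zero]
      rw [hr] at hco; simp at hco),
    myCardFilterBind, Multiset.map_map]
  have h3 : ∀ r : ℂ, card (filter (fun z => ‖z‖ < 1) ((X ^ N - C r).roots))
      = if ‖r‖ < 1 then N else 0 := fun r => myCardNth N hN r
  simp only [Function.comp, h3]
  exact mySumIte _ _ N

private theorem myCardCompUnit (P : ℂ[X]) (a : ℂ) (ha : ‖a‖ = 1) :
    card (((P.comp (C a * X)).roots).filter (fun z => ‖z‖ < 1))
      = card ((P.roots).filter (fun z => ‖z‖ < 1)) := by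
  have ha0 : a ≠ 0 := fun h => by simp [h] at ha
  rw [myRootsComp P a ha0, Multiset.filter_map, Multiset.card_map]
  congr 1
  apply Multiset.filter_congr
  intro r _
  show ‖a⁻¹ * r‖ < 1 ↔ ‖r‖ < 1
  rw [norm_mul, norm_inv, ha, inv_one, one_mul]

private theorem myProdShift {M : Type*} [CommMonoid M] (h : ℕ → M) (N : ℕ) (hN : 0 < N)
    (hNh : h N = h 0) : ∏ n ∈ Finset.range N, h (n + 1) = ∏ n ∈ Finset.range N, h n := by
  obtain ⟨m, rfl⟩ := Nat.exists_eq_succ_of_ne_zero hN.ne'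
  rw [Finset.prod_range_succ, Finset.prod_range_succ', hNh]

/-- **Blocking invariance of the topological invariant.**
Let `g` be a real Laurent polynomial, represented as `g z = p(z)/z^Np` with
`p.coeff 0 ≠ 0`.  For `N ≥ 1` and `ζ = e^{2πi/N}`, the product `Π_{n<N} g(ζⁿ z)` is a
Laurent polynomial in `z^N`: there is a real Laurent polynomial `f`, represented as
`f Z = q(Z)/Z^Nq` with `q.coeff 0 ≠ 0`, such that `f(z^N) = Π_{n<N} g(ζⁿ z)` for all
`z ≠ 0`; moreover any such `f` has the same invariant: `ω(f) = ω(g)`. -/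
theorem stmt4 (N : ℕ) (hN : 0 < N) (p : Polynomial ℝ) (Np : ℕ) (hp0 : p.coeff 0 ≠ 0) :
    (∃ (q : Polynomial ℝ) (Nq : ℕ), q.coeff 0 ≠ 0 ∧
      (∀ z : ℂ, z ≠ 0 →
        (q.map (algebraMap ℝ ℂ)).eval (z ^ N) / (z ^ N) ^ Nq
          = ∏ n ∈ Finset.range N,
              ((p.map (algebraMap ℝ ℂ)).eval (Complex.exp (2 * Real.pi * Complex.I * n / N) * z)
                / (Complex.exp (2 * Real.pi * Complex.I * n / N) * z) ^ Np))) ∧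
    (∀ (q : Polynomial ℝ) (Nq : ℕ), q.coeff 0 ≠ 0 →
      (∀ z : ℂ, z ≠ 0 →
        (q.map (algebraMap ℝ ℂ)).eval (z ^ N) / (z ^ N) ^ Nq
          = ∏ n ∈ Finset.range N,
              ((p.map (algebraMap ℝ ℂ)).eval (Complex.exp (2 * Real.pi * Complex.I * n / N) * z)
                / (Complex.exp (2 * Real.pi * Complex.I * n / N) * z) ^ Np)) →
      ((((q.map (algebraMap ℝ ℂ)).roots.filter (fun z => ‖z‖ < 1)).card : ℤ) - (Nq : ℤ))
        = ((((p.map (algebraMap ℝ ℂ)).roots.filter (fun z => ‖z‖ < 1)).card : ℤ) - (Np : ℤ))) := by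
  set P : ℂ[X] := p.map (algebraMap ℝ ℂ) with hPdef
  set ζ : ℂ := Complex.exp (2 * Real.pi * Complex.I / N) with hζdef
  have hprim : IsPrimitiveRoot ζ N := Complex.isPrimitiveRoot_exp N hN.ne'
  have hζN : ζ ^ N = 1 := hprim.pow_eq_one
  have hE : ∀ n : ℕ, Complex.exp (2 * Real.pi * Complex.I * n / N) = ζ ^ n := by
    intro n
    rw [hζdef, ← Complex.exp_nat_mul]
    congr 1
    ring
  have hζabs : ‖ζ‖ = 1 := by
    rw [hζdef, show (2 * (Real.pi : ℂ) * Complex.I / N) = ((2 * Real.pi / N : ℝ) : ℂ) * Complex.I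
      by push_cast; ring, Complex.norm_exp_ofReal_mul_I]
  have hζnabs : ∀ n : ℕ, ‖ζ ^ n‖ = 1 := fun n => by rw [norm_pow, hζabs, one_pow]
  have hζ0 : ζ ≠ 0 := fun h => by simp [h] at hζabs
  set F : ℂ[X] := ∏ n ∈ Finset.range N, P.comp (C (ζ ^ n) * X) with hFdef
  set c : ℂ := ∏ n ∈ Finset.range N, (ζ ^ n) ^ Np with hcdef
  -- c facts
  have hc2 : c ^ 2 = 1 := by
    have e1 : c = ζ ^ ((∑ n ∈ Finset.range N, n) * Np) := by
      rw [hcdef]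
      simp only [← pow_mul]
      rw [Finset.prod_pow_eq_pow_sum, ← Finset.sum_mul]
    rw [e1, ← pow_mul, mul_right_comm, Finset.sum_range_id_mul_two, mul_assoc, pow_mul, hζN,
      one_pow]
  have hccases : c = 1 ∨ c = -1 := by
    have h0 : (c - 1) * (c + 1) = 0 := by linear_combination hc2
    rcases mul_eq_zero.mp h0 with h' | h'
    · exact Or.inl (by linear_combination h')
    · exact Or.inr (by linear_combination h')
  have hc0 : c ≠ 0 := by rcases hccases with h | h <;> rw [h] <;> norm_num
  have hconjc : (starRingEnd ℂ) c = c := by rcases hccases with h | h <;> rw [h] <;> simp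
  -- P facts
  have hP0 : P.coeff 0 ≠ 0 := by
    rw [hPdef, coeff_map]
    simpa using hp0
  have hFeval : ∀ z : ℂ, F.eval z = ∏ n ∈ Finset.range N, P.eval (ζ ^ n * z) := by
    intro z
    rw [hFdef, eval_prod]
    exact Finset.prod_congr rfl fun n _ => by rw [eval_comp, eval_mul, eval_C, eval_X]
  have hF0 : F.eval 0 ≠ 0 := by
    rw [hFeval]
    apply Finset.prod_ne_zero_iff.mpr
    intro n _
    rw [mul_zero, ← coeff_zero_eq_eval_zero]
    exact hP0
  have hFne : F ≠ 0 := fun h => hF0 (by rw [h, eval_zero])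
  -- RHS rewriting
  have hRHS : ∀ z : ℂ, z ≠ 0 →
      (∏ n ∈ Finset.range N,
        (P.eval (Complex.exp (2 * Real.pi * Complex.I * n / N) * z)
          / (Complex.exp (2 * Real.pi * Complex.I * n / N) * z) ^ Np))
      = F.eval z / (c * z ^ (N * Np)) := by
    intro z hz
    simp only [hE]
    rw [Finset.prod_div_distrib, hFeval]
    congr 1
    simp only [mul_pow]
    rw [Finset.prod_mul_distrib, Finset.prod_const, Finset.card_range, ← pow_mul, mul_comm Np N,
      hcdef]
  -- key characterization
  have hkey : ∀ (q : Polynomial ℝ) (Nq : ℕ), q.coeff 0 ≠ 0 →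
      (∀ z : ℂ, z ≠ 0 →
        (q.map (algebraMap ℝ ℂ)).eval (z ^ N) / (z ^ N) ^ Nq
          = ∏ n ∈ Finset.range N,
              (P.eval (Complex.exp (2 * Real.pi * Complex.I * n / N) * z)
                / (Complex.exp (2 * Real.pi * Complex.I * n / N) * z) ^ Np)) →
      Nq = Np ∧ C c * (q.map (algebraMap ℝ ℂ)).comp (X ^ N) = F := by
    intro q Nq hq0 hfe
    set Q : ℂ[X] := q.map (algebraMap ℝ ℂ) with hQdef
    have hQ0 : Q.coeff 0 ≠ 0 := by
      rw [hQdef, coeff_map]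
      simpa using hq0
    have hcross : ∀ z : ℂ, z ≠ 0 →
        Q.eval (z ^ N) * (c * z ^ (N * Np)) = F.eval z * z ^ (N * Nq) := by
      intro z hz
      have h1 := hfe z hz
      rw [hRHS z hz, div_eq_div_iff (pow_ne_zero _ (pow_ne_zero _ hz))
        (mul_ne_zero hc0 (pow_ne_zero _ hz)), ← pow_mul] at h1
      exact h1
    have hpoly : C c * Q.comp (X ^ N) * X ^ (N * Np) = F * X ^ (N * Nq) := by
      apply eq_of_infinite_eval_eq
      apply Set.Infinite.mono (s := ({(0 : ℂ)}ᶜ : Set ℂ))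
      · intro z hz
        simp only [Set.mem_compl_iff, Set.mem_singleton_iff] at hz
        simp only [Set.mem_setOf_eq, eval_mul, eval_pow, eval_C, eval_X, eval_comp]
        linear_combination hcross z hz
      · exact (Set.finite_singleton (0 : ℂ)).infinite_compl
    have hA0 : (C c * Q.comp (X ^ N)).eval 0 ≠ 0 := by
      rw [eval_mul, eval_C, eval_comp, eval_pow, eval_X, zero_pow hN.ne',
        ← coeff_zero_eq_eval_zero]
      exact mul_ne_zero hc0 hQ0
    have hAne : C c * Q.comp (X ^ N) ≠ 0 := fun h => hA0 (by rw [h, eval_zero])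
    have hXpow : ∀ m : ℕ, rootMultiplicity 0 ((X : ℂ[X]) ^ m) = m := by
      intro m
      rw [show (X : ℂ[X]) ^ m = (X - C 0) ^ m by rw [C_0, sub_zero],
        rootMultiplicity_X_sub_C_pow]
    have hm : N * Np = N * Nq := by
      have h1 : rootMultiplicity 0 (C c * Q.comp (X ^ N) * X ^ (N * Np)) = N * Np := by
        rw [rootMultiplicity_mul (mul_ne_zero hAne (pow_ne_zero _ X_ne_zero)),
          rootMultiplicity_eq_zero hA0, zero_add, hXpow]
      have h2 : rootMultiplicity 0 (F * X ^ (N * Nq)) = N * Nq := by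
        rw [rootMultiplicity_mul (mul_ne_zero hFne (pow_ne_zero _ X_ne_zero)),
          rootMultiplicity_eq_zero hF0, zero_add, hXpow]
      rw [← h1, hpoly, h2]
    refine ⟨(Nat.eq_of_mul_eq_mul_left hN hm.symm), ?_⟩
    rw [hm] at hpoly
    exact mul_right_cancel₀ (pow_ne_zero _ X_ne_zero) hpoly
  -- F is invariant under z ↦ ζ z and conjugation
  have hcomp1 : ∀ (a b : ℂ), (P.comp (C a * X)).comp (C b * X) = P.comp (C (a * b) * X) := by
    intro a b
    rw [comp_assoc]
    congr 1
    rw [mul_comp, C_comp, X_comp, ← mul_assoc, ← C_mul]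
  have hshift : ∏ n ∈ Finset.range N, P.comp (C (ζ ^ (n + 1)) * X) = F := by
    rw [hFdef]
    apply myProdShift (fun n => P.comp (C (ζ ^ n) * X)) N hN
    simp only [hζN, pow_zero]
  have hinv : F.comp (C ζ * X) = F := by
    conv_lhs => rw [hFdef]
    rw [prod_comp]
    rw [show (∏ n ∈ Finset.range N, (P.comp (C (ζ ^ n) * X)).comp (C ζ * X))
        = ∏ n ∈ Finset.range N, P.comp (C (ζ ^ (n + 1)) * X) from
      Finset.prod_congr rfl fun n _ => by rw [hcomp1, ← pow_succ]]
    exact hshift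
  have hcoeffN : ∀ k : ℕ, ¬ N ∣ k → F.coeff k = 0 := by
    intro k hk
    have h1 : (F.comp (C ζ * X)).coeff k = F.coeff k := by rw [hinv]
    rw [myCoeffComp] at h1
    have hζk : ζ ^ k ≠ 1 := fun h => hk ((hprim.pow_eq_one_iff_dvd k).mp h)
    have h2 : (ζ ^ k - 1) * F.coeff k = 0 := by linear_combination h1
    rcases mul_eq_zero.mp h2 with h' | h'
    · exact absurd (by linear_combination h') hζk
    · exact h'
  have hconjζ : (starRingEnd ℂ) ζ = ζ⁻¹ := by
    have hm1 : ζ * (starRingEnd ℂ) ζ = 1 := by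
      rw [Complex.mul_conj, Complex.normSq_eq_norm_sq, hζabs]
      norm_num
    exact (inv_eq_of_mul_eq_one_right hm1).symm
  have hconjF : F.map (starRingEnd ℂ) = F := by
    have hPc : P.map (starRingEnd ℂ) = P := by
      rw [hPdef, Polynomial.map_map]
      congr 1
      exact RingHom.ext fun r => by simp [Complex.conj_ofReal]
    conv_lhs => rw [hFdef]
    rw [Polynomial.map_prod]
    have e1 : ∀ n ∈ Finset.range N,
        (P.comp (C (ζ ^ n) * X)).map (starRingEnd ℂ) = P.comp (C ((ζ⁻¹) ^ n) * X) := by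
      intro n _
      rw [Polynomial.map_comp, hPc, Polynomial.map_mul, map_C, Polynomial.map_X, map_pow, hconjζ]
    rw [Finset.prod_congr rfl e1, ← Finset.prod_range_reflect]
    rw [show (∏ n ∈ Finset.range N, P.comp (C ((ζ⁻¹) ^ (N - 1 - n)) * X))
        = ∏ n ∈ Finset.range N, P.comp (C (ζ ^ (n + 1)) * X) from ?_]
    · exact hshift
    apply Finset.prod_congr rfl
    intro n hn
    rw [Finset.mem_range] at hn
    congr 3
    rw [inv_pow]
    apply inv_eq_of_mul_eq_one_right
    rw [← pow_add, show N - 1 - n + (n + 1) = N by omega, hζN]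
  -- realness of the coefficients of C c * F
  have hGreal : ∀ k : ℕ, (((c * F.coeff k).re : ℝ) : ℂ) = c * F.coeff k := by
    intro k
    apply Complex.conj_eq_iff_re.mp
    rw [map_mul, hconjc]
    congr 1
    have h1 := congrArg (fun G => G.coeff k) hconjF
    simpa [coeff_map] using h1
  constructor
  · -- existence
    set q : Polynomial ℝ :=
      ∑ i ∈ Finset.range (F.natDegree + 1), Polynomial.C ((c * F.coeff (N * i)).re) * X ^ i
      with hqdef
    have hqmap : q.map (algebraMap ℝ ℂ)
        = ∑ i ∈ Finset.range (F.natDegree + 1), C (c * F.coeff (N * i)) * X ^ i := by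
      rw [hqdef, Polynomial.map_sum]
      apply Finset.sum_congr rfl
      intro i _
      rw [Polynomial.map_mul, map_C, Polynomial.map_pow, Polynomial.map_X]
      congr 1
      rw [show (algebraMap ℝ ℂ) ((c * F.coeff (N * i)).re) = (((c * F.coeff (N * i)).re : ℝ) : ℂ)
        from rfl, hGreal]
    have hq00 : q.coeff 0 = (c * F.coeff 0).re := by
      rw [hqdef, finset_sum_coeff]
      rw [Finset.sum_eq_single 0]
      · simp
      · intro b _ hb
        simp [coeff_C_mul, coeff_X_pow, Ne.symm hb]
      · intro h
        exact absurd (Finset.mem_range.mpr (Nat.succ_pos _)) h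
    have hq0 : q.coeff 0 ≠ 0 := by
      rw [hq00]
      intro h
      have h2 : c * F.coeff 0 = 0 := by rw [← hGreal 0, h, Complex.ofReal_zero]
      rcases mul_eq_zero.mp h2 with h' | h'
      · exact hc0 h'
      · rw [coeff_zero_eq_eval_zero] at h'
        exact hF0 h'
    have heval : ∀ z : ℂ, (q.map (algebraMap ℝ ℂ)).eval (z ^ N) = c * F.eval z := by
      intro z
      rw [hqmap, eval_finset_sum]
      simp only [eval_mul, eval_C, eval_pow, eval_X]
      rw [eval_eq_sum_range' (n := N * (F.natDegree + 1))
        (lt_of_lt_of_le (Nat.lt_succ_self _) (Nat.le_mul_of_pos_left _ hN)) z, Finset.mul_sum]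
      have hsub : (Finset.range (F.natDegree + 1)).image (fun i => N * i)
          ⊆ Finset.range (N * (F.natDegree + 1)) := by
        intro x hx
        rw [Finset.mem_image] at hx
        obtain ⟨i, hi, rfl⟩ := hx
        rw [Finset.mem_range] at hi ⊢
        exact (mul_lt_mul_iff_right₀ hN).mpr hi
      rw [← Finset.sum_subset hsub (fun x hx hxn => ?_)]
      · rw [Finset.sum_image (fun a _ b _ h => Nat.eq_of_mul_eq_mul_left hN h)]
        apply Finset.sum_congr rfl
        intro i _
        rw [pow_mul]
        ring
      · have hxd : ¬ N ∣ x := by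
          rintro ⟨i, rfl⟩
          exact hxn (Finset.mem_image.mpr ⟨i, Finset.mem_range.mpr
            ((mul_lt_mul_iff_right₀ hN).mp (Finset.mem_range.mp hx)), rfl⟩)
        rw [hcoeffN x hxd, zero_mul, mul_zero]
    exact ⟨q, Np, hq0, fun z hz => by
      rw [hRHS z hz, heval z,
        div_eq_div_iff (pow_ne_zero _ (pow_ne_zero _ hz)) (mul_ne_zero hc0 (pow_ne_zero _ hz)),
        ← pow_mul]
      linear_combination (F.eval z * z ^ (N * Np)) * hc2⟩
  · -- uniqueness of the invariant
    intro q Nq hq0 hfe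
    obtain ⟨hNq, hQF⟩ := hkey q Nq hq0 hfe
    set Q : ℂ[X] := q.map (algebraMap ℝ ℂ) with hQdef
    have hQ0 : Q.coeff 0 ≠ 0 := by
      rw [hQdef, coeff_map]
      simpa using hq0
    have hQne : Q ≠ 0 := fun h => hQ0 (by rw [h, coeff_zero])
    have h1 := myCardCompXN Q hQne N hN
    have h2 : (C c * Q.comp (X ^ N)).roots = (Q.comp (X ^ N)).roots := roots_C_mul _ hc0
    have hrootsF : F.roots = (Q.comp (X ^ N)).roots := by rw [← hQF, h2]
    have h3 : card (F.roots.filter (fun z => ‖z‖ < 1))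
        = N * card (P.roots.filter (fun z => ‖z‖ < 1)) := by
      rw [hFdef, roots_prod _ _ (by rw [← hFdef]; exact hFne), myCardFilterBind]
      have h4 : ∀ n : ℕ, card (filter (fun z => ‖z‖ < 1) ((P.comp (C (ζ ^ n) * X)).roots))
          = card (filter (fun z => ‖z‖ < 1) P.roots) :=
        fun n => myCardCompUnit P _ (hζnabs n)
      simp only [Function.comp, h4]
      rw [Multiset.map_const', Multiset.sum_replicate, Finset.range_val, Multiset.card_range,
        smul_eq_mul]
    have hcards : card (Q.roots.filter (fun z => ‖z‖ < 1))
        = card (P.roots.filter (fun z => ‖z‖ < 1)) := by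
      apply Nat.eq_of_mul_eq_mul_left hN
      rw [← h1, ← hrootsF, h3]
    rw [hNq, hcards]
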